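/- (Greedy binary expansion equals truncated binary expansion.) Let a be a real number and m an integer with 2^m ≤ a. Then there exists a finite set S of integers such that: (i) every e ∈ S satisfies e ≥ m; (ii) Σ_{e ∈ S} 2^e = 2^m · ⌊a / 2^m⌋; (iii) the maximal element of S is ⌊log₂ a⌋ (in particular S is nonempty); and (iv) for every e ∈ S, e = ⌊log₂ (a − Σ_{e' ∈ S, e' > e} 2^{e'})⌋, where ⌊log₂ x⌋ denotes Int.log 2 x; i.e., S is produced by the greedy algorithm that repeatedly subtracts the largest power of two not exceeding the remainder, stopped once the remainder drops below 2^m. -/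

import Mathlib

lemma greedy_aux (n : ℕ) : ∀ (a : ℝ) (m : ℤ), (2:ℝ)^m ≤ a →
    (Int.log 2 a - m).toNat ≤ n →
    ∃ S : Finset ℤ,
      (∀ e ∈ S, m ≤ e) ∧
      (∑ e ∈ S, (2:ℝ)^e = (2:ℝ)^m * (⌊a / (2:ℝ)^m⌋ : ℝ)) ∧
      (∃ hS : S.Nonempty, S.max' hS = Int.log 2 a) ∧
      (∀ e ∈ S, e = Int.log 2
        (a - ∑ e' ∈ S.filter (fun e' => e < e'), (2:ℝ)^e')) := by
  induction n using Nat.strong_induction_on with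
  | _ n ih =>
  intro a m h hn
  have hpm : (0:ℝ) < (2:ℝ)^m := by positivity
  have ha : (0:ℝ) < a := lt_of_lt_of_le hpm h
  set k := Int.log 2 a with hk
  have hk1 : (2:ℝ)^k ≤ a := by
    have := Int.zpow_log_le_self (R := ℝ) (b := 2) (by norm_num) ha
    simpa using this
  have hk2 : a < (2:ℝ)^(k+1) := by
    have := Int.lt_zpow_succ_log_self (R := ℝ) (b := 2) (by norm_num) a
    simpa using this
  have hmk : m ≤ k := by
    have := (Int.zpow_le_iff_le_log (R := ℝ) (b := 2) (by norm_num) ha (x := m)).mp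
      (by simpa using h)
    simpa using this
  -- N : the integer 2^(k-m)
  set N : ℤ := 2 ^ (k - m).toNat with hN
  have hNr : ((N:ℝ)) = (2:ℝ)^(k - m) := by
    rw [hN]
    push_cast
    rw [← zpow_natCast, Int.toNat_of_nonneg (by omega)]
  have hsplit : (2:ℝ)^m * (N:ℝ) = (2:ℝ)^k := by
    rw [hNr, ← zpow_add₀ (by norm_num : (2:ℝ) ≠ 0)]; ring_nf
  by_cases hcase : a - (2:ℝ)^k < (2:ℝ)^m
  · -- terminating case: S = {k}
    refine ⟨{k}, ?_, ?_, ?_, ?_⟩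
    · intro e he; simp at he; omega
    · have hfloor : ⌊a / (2:ℝ)^m⌋ = N := by
        rw [Int.floor_eq_iff]
        constructor
        · rw [hNr, le_div_iff₀ hpm, ← zpow_add₀ (by norm_num : (2:ℝ) ≠ 0)]
          convert hk1 using 2; rfl; omega
        · rw [hNr, div_lt_iff₀ hpm]
          have : (2:ℝ)^(k-m) * (2:ℝ)^m = (2:ℝ)^k := by
            rw [← zpow_add₀ (by norm_num : (2:ℝ) ≠ 0)]; ring_nf
          nlinarith
      rw [hfloor]; simpa using hsplit.symm
    · exact ⟨by simp, by simp⟩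
    · intro e he; simp at he; subst he
      have : ({k} : Finset ℤ).filter (fun e' => k < e') = ∅ := by
        ext x; simp; omega
      rw [this]; simp [hk]
  · -- recursive case
    push_neg at hcase
    set a' := a - (2:ℝ)^k with ha'
    have ha'pos : (0:ℝ) < a' := lt_of_lt_of_le hpm hcase
    have ha'lt : a' < (2:ℝ)^k := by
      have : (2:ℝ)^(k+1) = (2:ℝ)^k + (2:ℝ)^k := by
        rw [zpow_add₀ (by norm_num : (2:ℝ) ≠ 0)]; ring
      rw [ha']; linarith [hk2]
    have hloga' : Int.log 2 a' < k := by
      have := (Int.lt_zpow_iff_log_lt (R := ℝ) (b := 2) (by norm_num) ha'pos (x := k)).mp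
        (by simpa using ha'lt)
      simpa using this
    have hma' : m ≤ Int.log 2 a' := by
      have := (Int.zpow_le_iff_le_log (R := ℝ) (b := 2) (by norm_num) ha'pos (x := m)).mp
        (by simpa using hcase)
      simpa using this
    have hmk' : m < k := lt_of_le_of_lt hma' hloga'
    have hlt : (Int.log 2 a' - m).toNat < n := by
      have h1 : (Int.log 2 a' - m).toNat < (k - m).toNat := by omega
      omega
    obtain ⟨S', hS'1, hS'2, ⟨hS'ne, hS'max⟩, hS'4⟩ := ih _ hlt a' m hcase le_rfl
    have hbound : ∀ e ∈ S', e < k := fun e he =>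
      lt_of_le_of_lt (hS'max ▸ S'.le_max' e he) hloga'
    have hknot : k ∉ S' := fun hc => lt_irrefl k (hbound k hc)
    refine ⟨insert k S', ?_, ?_, ?_, ?_⟩
    · intro e he
      rcases Finset.mem_insert.mp he with rfl | he'
      · exact hmk
      · exact hS'1 e he'
    · rw [Finset.sum_insert hknot, hS'2]
      have hfloor : ⌊a / (2:ℝ)^m⌋ = ⌊a' / (2:ℝ)^m⌋ + N := by
        have : a / (2:ℝ)^m = a' / (2:ℝ)^m + (N:ℝ) := by
          rw [hNr, ha']
          field_simp
          rw [← zpow_add₀ (by norm_num : (2:ℝ) ≠ 0)]; ring_nf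
        rw [this, Int.floor_add_intCast]
      rw [hfloor]
      push_cast
      rw [mul_add, hsplit]; ring
    · refine ⟨Finset.insert_nonempty _ _, ?_⟩
      apply le_antisymm
      · apply Finset.max'_le
        intro e he
        rcases Finset.mem_insert.mp he with rfl | he'
        · exact le_rfl
        · exact le_of_lt (hbound e he')
      · exact Finset.le_max' _ k (Finset.mem_insert_self _ _)
    · intro e he
      rcases Finset.mem_insert.mp he with rfl | he'
      · have : (insert k S').filter (fun e' => k < e') = ∅ := by
          ext x
          simp only [Finset.mem_filter, Finset.mem_insert, Finset.notMem_empty, iff_false]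
          rintro ⟨rfl | hx, hlt2⟩
          · omega
          · exact absurd hlt2 (not_lt.mpr (le_of_lt (hbound x hx)))
        rw [this]; simp [hk]
      · have hek : e < k := hbound e he'
        have : (insert k S').filter (fun e' => e < e') =
            insert k (S'.filter (fun e' => e < e')) := by
          rw [Finset.filter_insert, if_pos hek]
        rw [this, Finset.sum_insert (by
          intro hc
          exact hknot (Finset.mem_filter.mp hc).1)]
        have : a - ((2:ℝ)^k + ∑ e' ∈ S'.filter (fun e' => e < e'), (2:ℝ)^e')
            = a' - ∑ e' ∈ S'.filter (fun e' => e < e'), (2:ℝ)^e' := by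
          rw [ha']; ring
        rw [this]
        exact hS'4 e he'

/-- Greedy binary expansion equals truncated binary expansion: for a real
`a ≥ 2^m`, the truncation `2^m · ⌊a / 2^m⌋` is a sum of distinct powers of two
with exponents `≥ m`, whose maximal exponent is `⌊log₂ a⌋`, and where each
exponent is obtained greedily as the binary logarithm of the remainder after
subtracting all larger powers. -/
theorem greedy_binary_expansion
    (a : ℝ) (m : ℤ) (h : (2:ℝ)^m ≤ a) :
    ∃ S : Finset ℤ,
      (∀ e ∈ S, m ≤ e) ∧
      (∑ e ∈ S, (2:ℝ)^e = (2:ℝ)^m * (⌊a / (2:ℝ)^m⌋ : ℝ)) ∧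
      (∃ hS : S.Nonempty, S.max' hS = Int.log 2 a) ∧
      (∀ e ∈ S, e = Int.log 2
        (a - ∑ e' ∈ S.filter (fun e' => e < e'), (2:ℝ)^e')) := by
  exact greedy_aux _ a m h le_rfl
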